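/- A morphism (f⁰, f¹) : X → Y of module factorizations is p-null-homotopical (i.e., there exist h⁰ : X⁰ → ᵗ⁻¹(Y¹) and h¹ : X¹ → Y⁰, each factoring through a projective A-module, with f⁰ = h¹d⁰_X + ᵗ⁻¹(d¹_Y)h⁰ and f¹ = d⁰_Y h¹ + ᵗ(h⁰)d¹_X) if and only if (f⁰, f¹) factors through θ⁰(P) ⊕ θ¹(Q) for some projective A-modules P and Q. -/

import Mathlib

/-!
STATEMENT 15: A morphism `(f⁰, f¹) : X → Y` of module factorizations is
p-null-homotopical (there are `h⁰ : X⁰ → ᵗ⁻¹(Y¹)` and `h¹ : X¹ → Y⁰`, each factoring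
through a projective `A`-module, with `f⁰ = h¹ ∘ d⁰_X + ᵗ⁻¹(d¹_Y) ∘ h⁰` and
`f¹ = d⁰_Y ∘ h¹ + ᵗ(h⁰) ∘ d¹_X`) if and only if `(f⁰, f¹)` factors through
`θ⁰(P) ⊕ θ¹(Q)` for some projective `A`-modules `P` and `Q`.
(Here a map into a `σ⁻¹`-twist is encoded as a `σ⁻¹`-semilinear map.)
-/

universe u v

/-- A module factorization `X = (X⁰, X¹; d⁰, d¹)` of `ω` over `A`: `d⁰ : X⁰ → X¹` is
`A`-linear and `d¹ : X¹ → ᵗ(X⁰)` is `A`-linear, i.e. `d¹ : X¹ → X⁰` is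
`σ`-semilinear, with `d¹ ∘ d⁰ = ω_{X⁰}` and `ᵗ(d⁰) ∘ d¹ = ω_{X¹}`. -/
structure MFact (A : Type u) [Ring A] (ω : A) (σ : A ≃+* A) : Type (max u (v + 1)) where
  X0 : ModuleCat.{v} A
  X1 : ModuleCat.{v} A
  d0 : X0 →ₗ[A] X1
  d1 : X1 →ₛₗ[(σ : A →+* A)] X0
  comp01 : ∀ x : X0, d1 (d0 x) = ω • x
  comp10 : ∀ x : X1, d0 (d1 x) = ω • x

variable {A : Type u} [Ring A] {ω : A} {σ : A ≃+* A}

/-- A morphism of module factorizations. -/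
@[ext] structure MFactHom (X Y : MFact.{u, v} A ω σ) where
  f0 : X.X0 →ₗ[A] Y.X0
  f1 : X.X1 →ₗ[A] Y.X1
  comm0 : ∀ x : X.X0, f1 (X.d0 x) = Y.d0 (f0 x)
  comm1 : ∀ x : X.X1, f0 (X.d1 x) = Y.d1 (f1 x)

/-- Composition of morphisms of module factorizations. -/
def MFactHom.comp {X Y Z : MFact.{u, v} A ω σ} (g : MFactHom Y Z) (f : MFactHom X Y) :
    MFactHom X Z where
  f0 := g.f0 ∘ₗ f.f0
  f1 := g.f1 ∘ₗ f.f1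
  comm0 := fun x => by
    simp only [LinearMap.comp_apply, f.comm0 x, g.comm0 (f.f0 x)]
  comm1 := fun x => by
    simp only [LinearMap.comp_apply, f.comm1 x, g.comm1 (f.f1 x)]

variable (ω σ)

/-- The trivial module factorization `θ⁰(M) = (M, M; Id_M, ω_M)`. -/
def theta0 (hσ : ∀ a : A, ω * a = σ a * ω)
    (M : Type v) [AddCommGroup M] [Module A M] : MFact.{u, v} A ω σ where
  X0 := ModuleCat.of A M
  X1 := ModuleCat.of A M
  d0 := LinearMap.id
  d1 :=
    { toFun := fun m => ω • m
      map_add' := fun x y => smul_add ω x y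
      map_smul' := fun a m => by
        simp only [RingHom.coe_coe]
        rw [smul_smul, smul_smul, hσ] }
  comp01 := fun x => rfl
  comp10 := fun x => rfl

/-- The `τ`-twist of a module: a copy of `M`, with the `A`-action `a • m = τ a • m`. -/
@[ext] structure Tw {A : Type u} [Ring A] (τ : A →+* A) (M : Type v) : Type v where
  /-- the element of `M` underlying an element of `Tw τ M` -/
  un : M

/-- The identity map `M → Tw τ M`. -/
def Tw.of {A : Type u} [Ring A] (τ : A →+* A) {M : Type v} (m : M) : Tw τ M := ⟨m⟩

section Tw

variable {A : Type u} [Ring A] (τ : A →+* A) (M : Type v) [AddCommGroup M] [Module A M]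

/-- The canonical bijection `Tw τ M ≃ M`. -/
def Tw.equiv : Tw τ M ≃ M := ⟨Tw.un, Tw.of τ, fun _ => rfl, fun _ => rfl⟩

instance : AddCommGroup (Tw τ M) := (Tw.equiv τ M).addCommGroup

instance : SMul A (Tw τ M) := ⟨fun a m => Tw.of τ (τ a • m.un)⟩

theorem Tw.un_add (x y : Tw τ M) : (x + y).un = x.un + y.un := rfl

theorem Tw.smul_def (a : A) (m : Tw τ M) : a • m = Tw.of τ (τ a • m.un) := rfl

instance : Module A (Tw τ M) :=
  Module.ofMinimalAxioms
    (fun a x y => by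
      ext
      show τ a • (x + y).un = (τ a • x.un) + (τ a • y.un)
      rw [Tw.un_add, smul_add])
    (fun a b x => by
      ext
      show τ (a + b) • x.un = (τ a • x.un) + (τ b • x.un)
      rw [map_add, add_smul])
    (fun a b x => by
      ext
      show τ (a * b) • x.un = τ a • τ b • x.un
      rw [map_mul, mul_smul])
    (fun x => by
      ext
      show τ 1 • x.un = x.un
      rw [map_one, one_smul])

end Tw

/-- The trivial module factorization `θ¹(M) = (ᵗ⁻¹(M), M; ω_{ᵗ⁻¹(M)}, Id_M)`. -/
def theta1 (hσ : ∀ a : A, ω * a = σ a * ω) (hreg : ∀ a : A, a * ω = 0 → a = 0)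
    (M : Type v) [AddCommGroup M] [Module A M] : MFact.{u, v} A ω σ where
  X0 := ModuleCat.of A (Tw (σ.symm : A →+* A) M)
  X1 := ModuleCat.of A M
  d0 :=
    { toFun := fun m => ω • m.un
      map_add' := fun x y => by
        show ω • (x + y).un = ω • x.un + ω • y.un
        rw [Tw.un_add, smul_add]
      map_smul' := fun a m => by
        simp only [RingHom.id_apply]
        show ω • (σ.symm a • m.un) = a • (ω • m.un)
        rw [smul_smul, smul_smul, hσ (σ.symm a), RingEquiv.apply_symm_apply] }
  d1 :=
    { toFun := fun m => Tw.of (σ.symm : A →+* A) m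
      map_add' := fun x y => rfl
      map_smul' := fun a m => by
        apply Tw.ext
        show a • m = σ.symm (σ a) • m
        rw [RingEquiv.symm_apply_apply] }
  comp01 := fun x => by
    have hσω : σ.symm ω = ω := by
      have h2 : (σ ω - ω) * ω = 0 := by rw [sub_mul, ← hσ ω, sub_self]
      have h3 : σ ω = ω := by
        have h4 := hreg _ h2
        rwa [sub_eq_zero] at h4
      rw [← h3, RingEquiv.symm_apply_apply, h3]
    apply Tw.ext
    show ω • x.un = σ.symm ω • x.un
    rw [hσω]
  comp10 := fun x => rfl

variable {ω σ}

/-- The direct sum of two module factorizations. -/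
def MFact.prod (X Y : MFact.{u, v} A ω σ) : MFact.{u, v} A ω σ where
  X0 := ModuleCat.of A (X.X0 × Y.X0)
  X1 := ModuleCat.of A (X.X1 × Y.X1)
  d0 := X.d0.prodMap Y.d0
  d1 :=
    { toFun := fun p => (X.d1 p.1, Y.d1 p.2)
      map_add' := fun p q => by
        show (X.d1 (p.1 + q.1), Y.d1 (p.2 + q.2)) = _
        rw [map_add, map_add]; rfl
      map_smul' := fun a p => by
        show (X.d1 (a • p.1), Y.d1 (a • p.2)) = _
        rw [X.d1.map_smulₛₗ, Y.d1.map_smulₛₗ]; rfl }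
  comp01 := fun p => by
    show (X.d1 (X.d0 p.1), Y.d1 (Y.d0 p.2)) = ω • p
    rw [X.comp01, Y.comp01]; rfl
  comp10 := fun p => by
    show (X.d0 (X.d1 p.1), Y.d0 (Y.d1 p.2)) = ω • p
    rw [X.comp10, Y.comp10]; rfl

/-- An `A`-linear map factors through some projective `A`-module. -/
def FactorsThroughProjective {A : Type u} [Ring A] {M N : ModuleCat.{v} A}
    (h : M →ₗ[A] N) : Prop :=
  ∃ Q : ModuleCat.{v} A, Module.Projective A Q ∧
    ∃ (u : M →ₗ[A] Q) (v : Q →ₗ[A] N), ∀ m, h m = v (u m)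

/-- A `τ`-semilinear map factors through some projective `A`-module (i.e. the
corresponding `A`-linear map into the twist factors through the twist of a
projective module). -/
def FactorsThroughProjectiveSL {A : Type u} [Ring A] (τ : A →+* A)
    {M N : ModuleCat.{v} A} (h : M →ₛₗ[τ] N) : Prop :=
  ∃ Q : ModuleCat.{v} A, Module.Projective A Q ∧
    ∃ (u : M →ₛₗ[τ] Q) (v : Q →ₗ[A] N), ∀ m, h m = v (u m)

theorem pNullHomotopical_iff_factors_through_trivial
    {A : Type u} [Ring A] (ω : A) (σ : A ≃+* A)
    (hσ : ∀ a : A, ω * a = σ a * ω)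
    (hreg : ∀ a : A, a * ω = 0 → a = 0) (hreg' : ∀ a : A, ω * a = 0 → a = 0)
    (X Y : MFact.{u, v} A ω σ) (f : MFactHom X Y) :
    (∃ (h0 : X.X0 →ₛₗ[(σ.symm : A →+* A)] Y.X1) (h1 : X.X1 →ₗ[A] Y.X0),
      FactorsThroughProjectiveSL (σ.symm : A →+* A) h0 ∧
      FactorsThroughProjective h1 ∧
      (∀ x : X.X0, f.f0 x = h1 (X.d0 x) + Y.d1 (h0 x)) ∧
      (∀ x : X.X1, f.f1 x = Y.d0 (h1 x) + h0 (X.d1 x))) ↔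
    (∃ P Q : ModuleCat.{v} A, Module.Projective A P ∧ Module.Projective A Q ∧
      ∃ (u : MFactHom X ((theta0 ω σ hσ P).prod (theta1 ω σ hσ hreg Q)))
        (v : MFactHom ((theta0 ω σ hσ P).prod (theta1 ω σ hσ hreg Q)) Y),
        (∀ x : X.X0, f.f0 x = (v.comp u).f0 x) ∧
        (∀ x : X.X1, f.f1 x = (v.comp u).f1 x)) := by
  have hσω : σ ω = ω := by
    have h2 : (σ ω - ω) * ω = 0 := by rw [sub_mul, ← hσ ω, sub_self]
    exact sub_eq_zero.mp (hreg _ h2)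
  have hσω' : σ.symm ω = ω := by
    have h := σ.symm_apply_apply ω
    rwa [hσω] at h
  constructor
  · rintro ⟨h0, h1, ⟨Q, hQ, u0, v0, hu0⟩, ⟨P, hP, u1, v1, hu1⟩, hf0, hf1⟩
    refine ⟨P, Q, hP, hQ, ?_⟩
    let uf0 : X.X0 →ₗ[A] (theta0 ω σ hσ P).X0 × (theta1 ω σ hσ hreg Q).X0 :=
      { toFun := fun x => (u1 (X.d0 x), Tw.of _ (u0 x))
        map_add' := fun x y => by
          simp only [map_add]; rfl
        map_smul' := fun a x => by
          simp only [map_smul, RingHom.id_apply, LinearMap.map_smulₛₗ]; rfl }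
    let uf1 : X.X1 →ₗ[A] (theta0 ω σ hσ P).X1 × (theta1 ω σ hσ hreg Q).X1 :=
      { toFun := fun x => (u1 x, u0 (X.d1 x))
        map_add' := fun x y => by simp only [map_add]; rfl
        map_smul' := fun a x => by
          simp only [map_smul, RingHom.id_apply, LinearMap.map_smulₛₗ,
            RingHom.coe_coe, RingEquiv.symm_apply_apply]; rfl }
    let U : MFactHom X ((theta0 ω σ hσ P).prod (theta1 ω σ hσ hreg Q)) :=
      { f0 := uf0
        f1 := uf1
        comm0 := fun x => by
          show (u1 (X.d0 x), u0 (X.d1 (X.d0 x))) = _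
          rw [X.comp01, u0.map_smulₛₗ]
          show _ = (u1 (X.d0 x), ω • u0 x)
          simp only [RingHom.coe_coe, hσω']
        comm1 := fun x => by
          show (u1 (X.d0 (X.d1 x)), Tw.of _ (u0 (X.d1 x))) = _
          rw [X.comp10, map_smul]
          rfl }
    let vf0 : (theta0 ω σ hσ P).X0 × (theta1 ω σ hσ hreg Q).X0 →ₗ[A] Y.X0 :=
      { toFun := fun p => v1 p.1 + Y.d1 (v0 p.2.un)
        map_add' := fun p q => by
          show v1 (p.1 + q.1) + Y.d1 (v0 (p.2 + q.2).un) = _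
          erw [Tw.un_add, map_add, map_add, map_add]; abel
        map_smul' := fun a p => by
          show v1 (a • p.1) + Y.d1 (v0 (a • p.2).un) = _
          have h2 : (a • p.2).un = σ.symm a • p.2.un := rfl
          erw [h2, map_smul, map_smul, Y.d1.map_smulₛₗ]
          simp only [RingHom.id_apply, RingHom.coe_coe, RingEquiv.apply_symm_apply,
            smul_add] }
    let vf1 : (theta0 ω σ hσ P).X1 × (theta1 ω σ hσ hreg Q).X1 →ₗ[A] Y.X1 :=
      { toFun := fun p => Y.d0 (v1 p.1) + v0 p.2
        map_add' := fun p q => by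
          show Y.d0 (v1 (p.1 + q.1)) + v0 (p.2 + q.2) = _
          erw [map_add, map_add, map_add]; abel
        map_smul' := fun a p => by
          show Y.d0 (v1 (a • p.1)) + v0 (a • p.2) = _
          erw [map_smul, map_smul, map_smul, smul_add]; rfl }
    let V : MFactHom ((theta0 ω σ hσ P).prod (theta1 ω σ hσ hreg Q)) Y :=
      { f0 := vf0
        f1 := vf1
        comm0 := fun p => by
          show Y.d0 (v1 p.1) + v0 (ω • p.2.un) = Y.d0 (v1 p.1 + Y.d1 (v0 p.2.un))
          rw [map_smul, map_add, Y.comp10]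
        comm1 := fun p => by
          show v1 (ω • p.1) + Y.d1 (v0 (Tw.of _ p.2).un)
              = Y.d1 (Y.d0 (v1 p.1) + v0 p.2)
          erw [map_add, Y.comp01, map_smul]
          rfl }
    refine ⟨U, V, fun x => ?_, fun x => ?_⟩
    · show f.f0 x = v1 (u1 (X.d0 x)) + Y.d1 (v0 (u0 x))
      rw [← hu1, ← hu0, hf0]
    · show f.f1 x = Y.d0 (v1 (u1 x)) + v0 (u0 (X.d1 x))
      rw [← hu1, ← hu0, hf1]
  · rintro ⟨P, Q, hP, hQ, u, v, hf0, hf1⟩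
    have vsplit0 : ∀ p : ↥P × Tw (σ.symm : A →+* A) ↥Q,
        v.f0 p = v.f0 (p.1, 0) + v.f0 (0, p.2) := by
      intro p
      erw [← map_add]
      congr 1
      show p = (p.1 + 0, (0 : Tw (σ.symm : A →+* A) ↥Q) + p.2)
      rw [add_zero, zero_add]
    have vsplit1 : ∀ p : ↥P × ↥Q, v.f1 p = v.f1 (p.1, 0) + v.f1 (0, p.2) := by
      intro p
      erw [← map_add]
      congr 1
      show p = (p.1 + 0, 0 + p.2)
      rw [add_zero, zero_add]
    refine ⟨{ toFun := fun x => v.f1 (0, (u.f0 x).2.un)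
              map_add' := fun x y => by
                show v.f1 (0, (u.f0 (x + y)).2.un)
                    = v.f1 (0, (u.f0 x).2.un) + v.f1 (0, (u.f0 y).2.un)
                have h1 : (u.f0 (x + y)).2.un = (u.f0 x).2.un + (u.f0 y).2.un := by
                  rw [map_add]; exact Tw.un_add _ _ _ _
                erw [h1, ← map_add, Prod.mk_add_mk, add_zero]; rfl
              map_smul' := fun a x => by
                show v.f1 (0, (u.f0 (a • x)).2.un) = σ.symm a • v.f1 (0, (u.f0 x).2.un)
                have h1 : (u.f0 (a • x)).2.un = σ.symm a • (u.f0 x).2.un := by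
                  rw [map_smul]; rfl
                erw [h1, ← map_smul, Prod.smul_mk, smul_zero]; rfl },
           { toFun := fun x => v.f0 ((u.f1 x).1, 0)
             map_add' := fun x y => by
               show v.f0 ((u.f1 (x + y)).1, 0)
                   = v.f0 ((u.f1 x).1, 0) + v.f0 ((u.f1 y).1, 0)
               have h1 : (u.f1 (x + y)).1 = (u.f1 x).1 + (u.f1 y).1 := by
                 rw [map_add]; rfl
               erw [h1, ← map_add, Prod.mk_add_mk, add_zero]; rfl
             map_smul' := fun a x => by
               show v.f0 ((u.f1 (a • x)).1, 0) = a • v.f0 ((u.f1 x).1, 0)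
               have h1 : (u.f1 (a • x)).1 = a • (u.f1 x).1 := by
                 rw [map_smul]; rfl
               erw [h1, ← map_smul, Prod.smul_mk, smul_zero]; rfl },
           ⟨Q, hQ, { toFun := fun x => (u.f0 x).2.un
                     map_add' := fun x y => by
                       show (u.f0 (x + y)).2.un = (u.f0 x).2.un + (u.f0 y).2.un
                       rw [map_add]; exact Tw.un_add _ _ _ _
                     map_smul' := fun a x => by
                       show (u.f0 (a • x)).2.un = σ.symm a • (u.f0 x).2.un
                       rw [map_smul]; rfl },
                    v.f1 ∘ₗ LinearMap.inr A ↥P ↥Q, fun x => rfl⟩,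
           ⟨P, hP, { toFun := fun x => (u.f1 x).1
                     map_add' := fun x y => by
                       show (u.f1 (x + y)).1 = (u.f1 x).1 + (u.f1 y).1
                       rw [map_add]; rfl
                     map_smul' := fun a x => by
                       show (u.f1 (a • x)).1 = a • (u.f1 x).1
                       rw [map_smul]; rfl },
                    { toFun := fun p => v.f0 (p, 0)
                      map_add' := fun p q => by
                        show v.f0 ((p + q : ↥P), 0) = v.f0 (p, 0) + v.f0 (q, 0)
                        erw [← map_add, Prod.mk_add_mk, add_zero]; rfl
                      map_smul' := fun a p => by
                        show v.f0 ((a • p : ↥P), 0) = a • v.f0 (p, 0)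
                        erw [← map_smul, Prod.smul_mk, smul_zero]; rfl },
                    fun x => rfl⟩,
           fun x => ?_, fun x => ?_⟩
    · -- f.f0 x = h1 (X.d0 x) + Y.d1 (h0 x)
      show f.f0 x = v.f0 ((u.f1 (X.d0 x)).1, 0) + Y.d1 (v.f1 (0, (u.f0 x).2.un))
      erw [hf0 x, u.comm0, ← v.comm1]
      show v.f0 (u.f0 x) = v.f0 (((u.f0 x).1, ω • ((u.f0 x).2).un).1, 0)
          + v.f0 (ω • (0 : ↥P), Tw.of _ ((u.f0 x).2).un)
      rw [smul_zero]
      have : (Tw.of (σ.symm : A →+* A) (((u.f0 x).2).un)) = (u.f0 x).2 := rfl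
      rw [this]
      exact vsplit0 (u.f0 x)
    · -- f.f1 x = Y.d0 (h1 x) + h0 (X.d1 x)
      show f.f1 x = Y.d0 (v.f0 ((u.f1 x).1, 0)) + v.f1 (0, (u.f0 (X.d1 x)).2.un)
      erw [hf1 x, u.comm1, ← v.comm0]
      show v.f1 (u.f1 x) = v.f1 ((u.f1 x).1, ω • ((0 : Tw (σ.symm : A →+* A) ↥Q)).un)
          + v.f1 (0, ((Tw.of (σ.symm : A →+* A) ((u.f1 x).2))).un)
      have h0un : ((0 : Tw (σ.symm : A →+* A) ↥Q)).un = (0 : ↥Q) := rfl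
      rw [h0un, smul_zero]
      exact vsplit1 (u.f1 x)
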